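/- For every (x, y) with (x, y) ≠ (0, 0) and every t ∈ ℝ, the partial derivative ∂a/∂x(x, y, t) exists and equals −∫₀^∞ x [ I′(t − R(z)/c)/(c R(z)²) + I(t − R(z)/c)/R(z)³ ] dz, where this last integral converges absolutely and R(z) = √(z² + x² + y²). -/

import Mathlib

open Real Filter MeasureTheory Topology

noncomputable def Pfun (c t y : ℝ) (I : ℝ → ℝ) (s z : ℝ) : ℝ :=
  I (t - Real.sqrt (z ^ 2 + s ^ 2 + y ^ 2) / c) / Real.sqrt (z ^ 2 + s ^ 2 + y ^ 2)

noncomputable def Qfun (c t y : ℝ) (I : ℝ → ℝ) (s z : ℝ) : ℝ :=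
  s * (deriv I (t - Real.sqrt (z ^ 2 + s ^ 2 + y ^ 2) / c)
        / (c * Real.sqrt (z ^ 2 + s ^ 2 + y ^ 2) ^ 2)
      + I (t - Real.sqrt (z ^ 2 + s ^ 2 + y ^ 2) / c)
        / Real.sqrt (z ^ 2 + s ^ 2 + y ^ 2) ^ 3)

lemma hasDerivAt_Pfun (c t y : ℝ) (I : ℝ → ℝ) (hc : c ≠ 0)
    (hI' : ∀ u, HasDerivAt I (deriv I u) u)
    {s : ℝ} (hs : 0 < s ^ 2 + y ^ 2) (z : ℝ) :
    HasDerivAt (fun s' => Pfun c t y I s' z) (-(Qfun c t y I s z)) s := by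
  have hpos : 0 < z ^ 2 + s ^ 2 + y ^ 2 := by nlinarith [sq_nonneg z]
  set r := Real.sqrt (z ^ 2 + s ^ 2 + y ^ 2) with hrdef
  have hr0 : 0 < r := Real.sqrt_pos.2 hpos
  have hrsq : r ^ 2 = z ^ 2 + s ^ 2 + y ^ 2 := Real.sq_sqrt hpos.le
  have hu : HasDerivAt (fun s' : ℝ => z ^ 2 + s' ^ 2 + y ^ 2) (2 * s) s := by
    have := ((hasDerivAt_pow 2 s).const_add (z ^ 2)).add_const (y ^ 2)
    simpa using this
  have hr : HasDerivAt (fun s' : ℝ => Real.sqrt (z ^ 2 + s' ^ 2 + y ^ 2)) (s / r) s := by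
    have h := (Real.hasDerivAt_sqrt (ne_of_gt hpos)).comp s hu
    have heq : 1 / (2 * Real.sqrt (z ^ 2 + s ^ 2 + y ^ 2)) * (2 * s) = s / r := by
      rw [← hrdef]; field_simp
    rw [heq] at h
    exact h
  have harg : HasDerivAt (fun s' : ℝ => t - Real.sqrt (z ^ 2 + s' ^ 2 + y ^ 2) / c)
      (-(s / r / c)) s := (hr.div_const c).const_sub t
  have hnum : HasDerivAt (fun s' : ℝ => I (t - Real.sqrt (z ^ 2 + s' ^ 2 + y ^ 2) / c))
      (deriv I (t - r / c) * -(s / r / c)) s := (hI' (t - r / c)).comp s harg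
  have h : HasDerivAt (fun s' => Pfun c t y I s' z) _ s := hnum.div hr (ne_of_gt hr0)
  convert h using 1
  simp only [Qfun, ← hrdef]
  field_simp
  ring


lemma continuous_sqrt_aux (y s : ℝ) : Continuous (fun z : ℝ => Real.sqrt (z ^ 2 + s ^ 2 + y ^ 2)) :=
  Real.continuous_sqrt.comp (by continuity)

lemma sqrt_aux_pos {y s : ℝ} (hs : 0 < s ^ 2 + y ^ 2) (z : ℝ) :
    0 < Real.sqrt (z ^ 2 + s ^ 2 + y ^ 2) :=
  Real.sqrt_pos.2 (by nlinarith [sq_nonneg z])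

lemma continuous_Pfun (c t y : ℝ) (I : ℝ → ℝ) (hIc : Continuous I)
    {s : ℝ} (hs : 0 < s ^ 2 + y ^ 2) : Continuous (fun z => Pfun c t y I s z) := by
  unfold Pfun
  exact (hIc.comp (by continuity)).div (continuous_sqrt_aux y s)
    (fun z => (sqrt_aux_pos hs z).ne')

lemma continuous_Qfun (c t y : ℝ) (I : ℝ → ℝ) (hIc : Continuous I)
    (hI'c : Continuous (deriv I)) {s : ℝ} (hc : c ≠ 0) (hs : 0 < s ^ 2 + y ^ 2) :
    Continuous (fun z => Qfun c t y I s z) := by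
  unfold Qfun
  have h1 : Continuous (fun z : ℝ => t - Real.sqrt (z ^ 2 + s ^ 2 + y ^ 2) / c) := by
    continuity
  refine continuous_const.mul (((hI'c.comp h1).div
    (continuous_const.mul ((continuous_sqrt_aux y s).pow 2))
    (fun z => ?_)).add ((hIc.comp h1).div ((continuous_sqrt_aux y s).pow 3)
    (fun z => by
      have := sqrt_aux_pos hs z; positivity)))
  have := sqrt_aux_pos hs z
  exact mul_ne_zero hc (pow_ne_zero _ this.ne')

lemma Qfun_abs_le (c t y : ℝ) (I : ℝ → ℝ) (hc : 0 < c) {ε B C₀ : ℝ} (hε : 0 < ε)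
    (hB : 0 ≤ B) (hC₀ : 0 ≤ C₀)
    (hCI : ∀ u, |I u| ≤ C₀) (hCI' : ∀ u, |deriv I u| ≤ C₀)
    {s : ℝ} (h1 : ε ^ 2 ≤ s ^ 2 + y ^ 2) (h2 : |s| ≤ B) (z : ℝ) :
    |Qfun c t y I s z| ≤ (B * C₀ * (1 / c + 1 / ε) / min 1 (ε ^ 2)) * (1 + z ^ 2)⁻¹ := by
  have hpos : 0 < z ^ 2 + s ^ 2 + y ^ 2 := by nlinarith [sq_nonneg z, sq_nonneg ε]
  set r := Real.sqrt (z ^ 2 + s ^ 2 + y ^ 2) with hrdef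
  have hr0 : 0 < r := Real.sqrt_pos.2 hpos
  have hrsq : r ^ 2 = z ^ 2 + s ^ 2 + y ^ 2 := Real.sq_sqrt hpos.le
  have hεr : ε ≤ r := by
    rw [hrdef, show ε = Real.sqrt (ε ^ 2) by rw [Real.sqrt_sq hε.le]]
    exact Real.sqrt_le_sqrt (by nlinarith [sq_nonneg z])
  have hm : 0 < min 1 (ε ^ 2) := lt_min one_pos (by positivity)
  have hz1 : min 1 (ε ^ 2) * (1 + z ^ 2) ≤ z ^ 2 + ε ^ 2 := by
    rcases le_total 1 (ε ^ 2) with h | h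
    · rw [min_eq_left h]; nlinarith [sq_nonneg z]
    · rw [min_eq_right h]; nlinarith [sq_nonneg z]
  have hr2 : z ^ 2 + ε ^ 2 ≤ r ^ 2 := by nlinarith
  have hr3 : ε * (z ^ 2 + ε ^ 2) ≤ r ^ 3 := by nlinarith [sq_nonneg z]
  set u := t - r / c with hu
  have key1 : |deriv I u / (c * r ^ 2)| ≤ C₀ / (c * (min 1 (ε ^ 2) * (1 + z ^ 2))) := by
    rw [abs_div, abs_of_pos (by positivity : (0:ℝ) < c * r ^ 2)]
    apply div_le_div₀ hC₀ (hCI' u) (by positivity)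
    have : min 1 (ε ^ 2) * (1 + z ^ 2) ≤ r ^ 2 := le_trans hz1 (le_trans hr2 (le_refl _))
    nlinarith [hc.le]
  have key2 : |I u / r ^ 3| ≤ C₀ / (ε * (min 1 (ε ^ 2) * (1 + z ^ 2))) := by
    rw [abs_div, abs_of_pos (by positivity : (0:ℝ) < r ^ 3)]
    apply div_le_div₀ hC₀ (hCI u) (by positivity)
    calc ε * (min 1 (ε ^ 2) * (1 + z ^ 2)) ≤ ε * (z ^ 2 + ε ^ 2) := by
          apply mul_le_mul_of_nonneg_left hz1 hε.le
      _ ≤ r ^ 3 := hr3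
  have habs : |Qfun c t y I s z| ≤ B * (C₀ / (c * (min 1 (ε ^ 2) * (1 + z ^ 2)))
      + C₀ / (ε * (min 1 (ε ^ 2) * (1 + z ^ 2)))) := by
    rw [Qfun, abs_mul, ← hrdef, ← hu]
    apply mul_le_mul h2 (le_trans (abs_add_le _ _) (add_le_add key1 key2)) (abs_nonneg _)
      (le_trans (abs_nonneg s) h2)
  refine le_trans habs (le_of_eq ?_)
  have h1z : (0:ℝ) < 1 + z ^ 2 := by positivity
  field_simp

set_option maxHeartbeats 1000000 in
theorem retarded_potential_deriv_x
    (c T : ℝ) (hc : 0 < c) (hT : 0 < T)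
    (I : ℝ → ℝ) (hI : ContDiff ℝ 4 I) (hper : Function.Periodic I T)
    (hmean : (∫ s in (0:ℝ)..T, I s) = 0)
    (a : ℝ → ℝ → ℝ → ℝ)
    (ha : ∀ x y t : ℝ, (x, y) ≠ ((0 : ℝ), (0 : ℝ)) →
      Tendsto
        (fun M : ℝ => ∫ z in (0:ℝ)..M,
          I (t - Real.sqrt (z ^ 2 + x ^ 2 + y ^ 2) / c)
            / Real.sqrt (z ^ 2 + x ^ 2 + y ^ 2))
        atTop (nhds (a x y t)))
    (x y t : ℝ) (hxy : (x, y) ≠ ((0 : ℝ), (0 : ℝ))) :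
    MeasureTheory.IntegrableOn
      (fun z : ℝ => x *
        (deriv I (t - Real.sqrt (z ^ 2 + x ^ 2 + y ^ 2) / c)
            / (c * Real.sqrt (z ^ 2 + x ^ 2 + y ^ 2) ^ 2)
          + I (t - Real.sqrt (z ^ 2 + x ^ 2 + y ^ 2) / c)
            / Real.sqrt (z ^ 2 + x ^ 2 + y ^ 2) ^ 3))
      (Set.Ioi (0 : ℝ)) ∧
    HasDerivAt (fun s : ℝ => a s y t)
      (-(∫ z in Set.Ioi (0 : ℝ), x *
        (deriv I (t - Real.sqrt (z ^ 2 + x ^ 2 + y ^ 2) / c)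
            / (c * Real.sqrt (z ^ 2 + x ^ 2 + y ^ 2) ^ 2)
          + I (t - Real.sqrt (z ^ 2 + x ^ 2 + y ^ 2) / c)
            / Real.sqrt (z ^ 2 + x ^ 2 + y ^ 2) ^ 3)))
      x := by
  have hI' : ∀ u, HasDerivAt I (deriv I u) u := fun u =>
    ((hI.differentiable (by norm_num)) u).hasDerivAt
  have hIc : Continuous I := hI.continuous
  have hI'c : Continuous (deriv I) := hI.continuous_deriv (by norm_num)
  obtain ⟨C₁, hC₁⟩ := (hper.isBounded_of_continuous hT.ne' hIc).exists_norm_le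
  have hperI' : Function.Periodic (deriv I) T := by
    intro u
    have hca : HasDerivAt (fun v => I (v + T)) (deriv I (u + T)) u := by
      have h := (hI' (u + T)).comp u ((hasDerivAt_id u).add_const T)
      simpa [Function.comp_def] using h
    have hfe : (fun v => I (v + T)) = I := funext fun v => hper v
    rw [hfe] at hca
    exact hca.deriv.symm
  obtain ⟨C₂, hC₂⟩ := (hperI'.isBounded_of_continuous hT.ne' hI'c).exists_norm_le
  set C₀ := max C₁ C₂ with hC₀def
  have hCI : ∀ u, |I u| ≤ C₀ := fun u =>
    le_trans (by simpa [Real.norm_eq_abs] using hC₁ _ ⟨u, rfl⟩) (le_max_left _ _)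
  have hCI' : ∀ u, |deriv I u| ≤ C₀ := fun u =>
    le_trans (by simpa [Real.norm_eq_abs] using hC₂ _ ⟨u, rfl⟩) (le_max_right _ _)
  have hC₀ : 0 ≤ C₀ := le_trans (abs_nonneg _) (hCI 0)
  -- geometry
  have hxo : x ≠ 0 ∨ y ≠ 0 := by
    by_contra h
    push_neg at h
    exact hxy (by simp [h.1, h.2])
  have habs : 0 < |x| + |y| := by
    rcases hxo with h | h
    · have := abs_pos.2 h; linarith [abs_nonneg y]
    · have := abs_pos.2 h; linarith [abs_nonneg x]
  set ε := (|x| + |y|) / 4 with hεdef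
  have hε : 0 < ε := by rw [hεdef]; linarith
  set U := Metric.ball x (2 * ε) with hUdef
  have hxU : x ∈ U := Metric.mem_ball_self (by linarith)
  have keyU : ∀ s ∈ U, ε ^ 2 ≤ s ^ 2 + y ^ 2 := by
    intro s hs
    have hsx : |s - x| < 2 * ε := by
      have := Metric.mem_ball.1 hs
      simpa [Real.dist_eq] using this
    rcases le_or_gt ε |y| with h | h
    · nlinarith [sq_nonneg s, sq_abs y]
    · have hx3 : 3 * ε ≤ |x| := by rw [hεdef] at h ⊢; linarith
      have htr : |x| ≤ |s| + |s - x| := by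
        have : |x| = |s - (s - x)| := by congr 1; ring
        rw [this]
        exact abs_sub _ _
      have hsl : ε ≤ |s| := by linarith
      nlinarith [sq_abs s, sq_nonneg y]
  have hUpos : ∀ s ∈ U, 0 < s ^ 2 + y ^ 2 := fun s hs =>
    lt_of_lt_of_le (by positivity) (keyU s hs)
  set B := |x| + 2 * ε with hBdef
  have hBpos : 0 ≤ B := by positivity
  have hsB : ∀ s ∈ U, |s| ≤ B := by
    intro s hs
    have hsx : |s - x| < 2 * ε := by
      have := Metric.mem_ball.1 hs
      simpa [Real.dist_eq] using this
    have : |s| = |x + (s - x)| := by congr 1; ring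
    rw [this]
    calc |x + (s - x)| ≤ |x| + |s - x| := abs_add_le _ _
      _ ≤ B := by rw [hBdef]; linarith
  -- dominating function
  set K := B * C₀ * (1 / c + 1 / ε) / min 1 (ε ^ 2) with hKdef
  set ψ : ℝ → ℝ := fun z => K * (1 + z ^ 2)⁻¹ with hψdef
  have hψc : Continuous ψ :=
    continuous_const.mul ((continuous_const.add (continuous_pow 2)).inv₀
      fun z => (by positivity : (0:ℝ) < 1 + z ^ 2).ne')
  have hψint : Integrable ψ := integrable_inv_one_add_sq.const_mul K
  have hQb : ∀ s ∈ U, ∀ z, |Qfun c t y I s z| ≤ ψ z := fun s hs z =>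
    Qfun_abs_le c t y I hc hε hBpos hC₀ hCI hCI' (keyU s hs) (hsB s hs) z
  have hQint : ∀ s ∈ U, IntegrableOn (fun z => Qfun c t y I s z) (Set.Ioi 0) := by
    intro s hs
    refine Integrable.mono' hψint.integrableOn
      ((continuous_Qfun c t y I hIc hI'c hc.ne' (hUpos s hs)).aestronglyMeasurable) ?_
    exact Filter.Eventually.of_forall fun z => by
      simpa [Real.norm_eq_abs] using hQb s hs z
  -- splitting of improper integrals
  have hsplit : ∀ (f : ℝ → ℝ), IntegrableOn f (Set.Ioi 0) → ∀ M : ℝ, 0 ≤ M →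
      (∫ z in Set.Ioi (0:ℝ), f z) = (∫ z in (0:ℝ)..M, f z) + ∫ z in Set.Ioi M, f z := by
    intro f hf M hM
    rw [intervalIntegral.integral_of_le hM, ← MeasureTheory.setIntegral_union
      Set.Ioc_disjoint_Ioi_same measurableSet_Ioi (hf.mono_set Set.Ioc_subset_Ioi_self)
      (hf.mono_set (Set.Ioi_subset_Ioi hM)), Set.Ioc_union_Ioi_eq_Ioi hM]
  have htail : ∀ s ∈ U, ∀ M : ℝ, 0 ≤ M →
      |(∫ z in Set.Ioi (0:ℝ), Qfun c t y I s z) - ∫ z in (0:ℝ)..M, Qfun c t y I s z|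
        ≤ ∫ z in Set.Ioi M, ψ z := by
    intro s hs M hM
    rw [hsplit _ (hQint s hs) M hM, add_sub_cancel_left]
    calc |∫ z in Set.Ioi M, Qfun c t y I s z|
        ≤ ∫ z in Set.Ioi M, |Qfun c t y I s z| := by
          simpa [Real.norm_eq_abs] using
            norm_integral_le_integral_norm (μ := volume.restrict (Set.Ioi M))
              (fun z => Qfun c t y I s z)
      _ ≤ ∫ z in Set.Ioi M, ψ z := by
          apply setIntegral_mono_on
            (((hQint s hs).mono_set (Set.Ioi_subset_Ioi hM)).abs)
            hψint.integrableOn measurableSet_Ioi (fun z _ => hQb s hs z)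
  have htail0 : Tendsto (fun M => ∫ z in Set.Ioi M, ψ z) atTop (𝓝 0) := by
    have h1 : Tendsto (fun M => ∫ z in (0:ℝ)..M, ψ z) atTop
        (𝓝 (∫ z in Set.Ioi (0:ℝ), ψ z)) :=
      intervalIntegral_tendsto_integral_Ioi 0 hψint.integrableOn tendsto_id
    have h2 := (tendsto_const_nhds (x := ∫ z in Set.Ioi (0:ℝ), ψ z)
      (f := atTop (α := ℝ))).sub h1
    rw [sub_self] at h2
    apply h2.congr'
    filter_upwards [eventually_ge_atTop (0:ℝ)] with M hM
    rw [hsplit ψ hψint.integrableOn M hM]; ring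
  -- uniform convergence of derivatives
  have hunif : TendstoUniformlyOn
      (fun M s' => -(∫ z in (0:ℝ)..M, Qfun c t y I s' z))
      (fun s' => -(∫ z in Set.Ioi (0:ℝ), Qfun c t y I s' z)) atTop U := by
    rw [Metric.tendstoUniformlyOn_iff]
    intro δ hδ
    filter_upwards [htail0.eventually (gt_mem_nhds hδ), eventually_ge_atTop (0:ℝ)]
      with M h1 h2 s hs
    rw [Real.dist_eq]
    have heq : -(∫ z in Set.Ioi (0:ℝ), Qfun c t y I s z) -
        -(∫ z in (0:ℝ)..M, Qfun c t y I s z) =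
        -((∫ z in Set.Ioi (0:ℝ), Qfun c t y I s z) -
          ∫ z in (0:ℝ)..M, Qfun c t y I s z) := by ring
    rw [heq, abs_neg]
    exact lt_of_le_of_lt (htail s hs M h2) h1
  -- derivative of the truncated integrals
  have hFd : ∀ M : ℝ, ∀ s ∈ U, HasDerivAt (fun s' => ∫ z in (0:ℝ)..M, Pfun c t y I s' z)
      (-(∫ z in (0:ℝ)..M, Qfun c t y I s z)) s := by
    intro M s hs
    have hδ : 0 < 2 * ε - dist s x := by
      have := Metric.mem_ball.1 hs; linarith
    have hsub : Metric.ball s (2 * ε - dist s x) ⊆ U := by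
      intro u hu
      rw [Metric.mem_ball] at hu ⊢
      calc dist u x ≤ dist u s + dist s x := dist_triangle _ _ _
        _ < 2 * ε := by linarith
    have hmeas : ∀ᶠ s' in 𝓝 s,
        AEStronglyMeasurable (fun z => Pfun c t y I s' z)
          (volume.restrict (Set.uIoc (0:ℝ) M)) := by
      filter_upwards [Metric.isOpen_ball.mem_nhds hs] with s' hs'
      exact (continuous_Pfun c t y I hIc (hUpos s' hs')).aestronglyMeasurable
    have hint : IntervalIntegrable (fun z => Pfun c t y I s z) volume 0 M :=
      (continuous_Pfun c t y I hIc (hUpos s hs)).intervalIntegrable _ _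
    have hmeas' : AEStronglyMeasurable (fun z => -(Qfun c t y I s z))
        (volume.restrict (Set.uIoc (0:ℝ) M)) :=
      ((continuous_Qfun c t y I hIc hI'c hc.ne' (hUpos s hs)).neg).aestronglyMeasurable
    have hbnd : ∀ᵐ z ∂volume, z ∈ Set.uIoc (0:ℝ) M →
        ∀ s' ∈ Metric.ball s (2 * ε - dist s x), ‖-(Qfun c t y I s' z)‖ ≤ ψ z :=
      Filter.Eventually.of_forall fun z _ s' hs' => by
        simpa [Real.norm_eq_abs] using hQb s' (hsub hs') z
    have hbint : IntervalIntegrable ψ volume 0 M := hψc.intervalIntegrable _ _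
    have hdiff : ∀ᵐ z ∂volume, z ∈ Set.uIoc (0:ℝ) M →
        ∀ s' ∈ Metric.ball s (2 * ε - dist s x),
          HasDerivAt (fun s'' => Pfun c t y I s'' z) (-(Qfun c t y I s' z)) s' :=
      Filter.Eventually.of_forall fun z _ s' hs' =>
        hasDerivAt_Pfun c t y I hc.ne' hI' (hUpos s' (hsub hs')) z
    have hres := intervalIntegral.hasDerivAt_integral_of_dominated_loc_of_deriv_le
      (Metric.ball_mem_nhds s hδ) hmeas hint hmeas' hbnd hbint hdiff
    have h := hres.2
    rwa [intervalIntegral.integral_neg] at h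
  -- pointwise convergence
  have hpt : ∀ s ∈ U, Tendsto (fun M => ∫ z in (0:ℝ)..M, Pfun c t y I s z) atTop
      (𝓝 (a s y t)) := by
    intro s hs
    have hne : (s, y) ≠ ((0:ℝ), (0:ℝ)) := by
      intro h
      rw [Prod.mk.injEq] at h
      have := hUpos s hs
      rw [h.1, h.2] at this
      norm_num at this
    simpa [Pfun] using ha s y t hne
  have main := hasDerivAt_of_tendstoUniformlyOn Metric.isOpen_ball hunif
    (Filter.Eventually.of_forall hFd) hpt hxU
  exact ⟨hQint x hxU, main⟩
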